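/- Fix an integer m ≥ 2. The generating function G(x) of m-reduced zigzag stacks of type G satisfies, as formal power series, G(x) = 1 + x·Z_m(x) + x²·Z_m(x)·T₂(x)/(1 − x·T₄(x)). -/

import Mathlib

open PowerSeries

namespace Paper

/-- The arc set of a diagram: a finite set of pairs `(i,j)`. -/
abbrev Arcs := Finset (ℕ × ℕ)

/-- A diagram on `[n] = {1,…,n}`: every arc `(i,j)` satisfies `1 ≤ i < j ≤ n`. -/
def IsDiagram (n : ℕ) (A : Arcs) : Prop :=
  ∀ p ∈ A, 1 ≤ p.1 ∧ p.1 < p.2 ∧ p.2 ≤ n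

/-- Two arcs `p = (i₁,j₁)` and `q = (i₂,j₂)` cross if `i₁ < i₂ < j₁ < j₂`. -/
def Crossing (p q : ℕ × ℕ) : Prop :=
  p.1 < q.1 ∧ q.1 < p.2 ∧ p.2 < q.2

/-- A stack on `[n]`: a diagram with no two crossing arcs. -/
def IsStack (n : ℕ) (A : Arcs) : Prop :=
  IsDiagram n A ∧ ∀ p ∈ A, ∀ q ∈ A, ¬ Crossing p q

/-- Left-degree of vertex `v`: number of arcs `(u,v)` with `u < v`. -/
def ld (A : Arcs) (v : ℕ) : ℕ := (A.filter fun p => p.2 = v).card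

/-- Right-degree of vertex `v`: number of arcs `(v,w)` with `v < w`. -/
def rd (A : Arcs) (v : ℕ) : ℕ := (A.filter fun p => p.1 = v).card

/-- Degree of a vertex. -/
def deg (A : Arcs) (v : ℕ) : ℕ := ld A v + rd A v

/-- A zigzag stack: a stack where every vertex has degree ≤ 2 and no vertex has both
positive left-degree and positive right-degree. -/
def IsZigzag (n : ℕ) (A : Arcs) : Prop :=
  IsStack n A ∧ (∀ v, deg A v ≤ 2) ∧ ∀ v, ¬ (1 ≤ ld A v ∧ 1 ≤ rd A v)

/-- Adjacency in the underlying graph of a diagram. -/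
def adj (A : Arcs) (u v : ℕ) : Prop := (u, v) ∈ A ∨ (v, u) ∈ A

/-- `v` lies in the primary component (connected component of vertex 1). -/
def inPrimary (A : Arcs) (v : ℕ) : Prop := Relation.ReflTransGen (adj A) 1 v

/-- The underlying graph on vertex set `[n]` is connected. -/
def ConnectedOn (n : ℕ) (A : Arcs) : Prop :=
  ∀ u v, 1 ≤ u → u ≤ n → 1 ≤ v → v ≤ n → Relation.ReflTransGen (adj A) u v

/-- Number of stacks on `[n]`. -/
noncomputable def stackCount (n : ℕ) : ℕ := Nat.card {A : Arcs // IsStack n A}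

/-- Number of zigzag stacks on `[n]`. -/
noncomputable def zigzagCount (n : ℕ) : ℕ := Nat.card {A : Arcs // IsZigzag n A}

/-- Number of connected zigzag stacks on `[n]`. -/
noncomputable def connZigzagCount (n : ℕ) : ℕ :=
  Nat.card {A : Arcs // IsZigzag n A ∧ ConnectedOn n A}

/-- The ordinary generating function of the numbers of zigzag stacks. -/
noncomputable def Zgf : PowerSeries ℚ := PowerSeries.mk fun n => (zigzagCount n : ℚ)

/-- The power series variable over ℚ. -/
noncomputable def Xq : PowerSeries ℚ := PowerSeries.X

/-- An `m`-reduced zigzag stack on `[n]`: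
(1) `ld(i) + rd(i+m−1) ≤ 2` for `1 ≤ i ≤ n−m+1` (written additively);
(2) if `1 ≤ i < j ≤ n` with `ld(i) > 0` and `rd(j) > 0` then `j − i ≥ m−1`. -/
def MRed (m n : ℕ) (A : Arcs) : Prop :=
  IsZigzag n A ∧
  (∀ i, 1 ≤ i → i + m ≤ n + 1 → ld A i + rd A (i + m - 1) ≤ 2) ∧
  (∀ i j, 1 ≤ i → i < j → j ≤ n → 0 < ld A i → 0 < rd A j → i + m ≤ j + 1)

/-- An `m`-regular linear stack on `[n]`: every arc has length ≥ m and every vertex has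
degree ≤ 2. -/
def RegLinear (m n : ℕ) (A : Arcs) : Prop :=
  IsStack n A ∧ (∀ p ∈ A, p.1 + m ≤ p.2) ∧ ∀ v, deg A v ≤ 2

/-- Number of `m`-reduced zigzag stacks on `[n]`. -/
noncomputable def zm (m n : ℕ) : ℕ := Nat.card {A : Arcs // MRed m n A}

/-- Number of `m`-regular linear stacks on `[n]`. -/
noncomputable def rmc (m n : ℕ) : ℕ := Nat.card {A : Arcs // RegLinear m n A}

/-- Generating function of `m`-reduced zigzag stacks. -/
noncomputable def Zm (m : ℕ) : PowerSeries ℚ := PowerSeries.mk fun n => (zm m n : ℚ)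

/-- Generating function of `m`-regular linear stacks. -/
noncomputable def Rm (m : ℕ) : PowerSeries ℚ := PowerSeries.mk fun n => (rmc m n : ℚ)

/-- Extended left-degree function used to define boundary types. -/
def extLD (A : Arcs) (l a v : ℕ) : ℕ :=
  if v = 0 then a else if v = l + 1 then 0 else ld A v

/-- Extended right-degree function used to define boundary types. -/
def extRD (A : Arcs) (l b v : ℕ) : ℕ :=
  if v = 0 then 0 else if v = l + 1 then b else rd A v

/-- An `m`-reduced zigzag stack on `[l]` of boundary type `(a,b)`. -/
def BoundaryType (m a b l : ℕ) (A : Arcs) : Prop :=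
  MRed m l A ∧
  (∀ i, i + m ≤ l + 2 → extLD A l a i + extRD A l b (i + m - 1) ≤ 2) ∧
  (∀ i j, i < j → j ≤ l + 1 → 0 < extLD A l a i → 0 < extRD A l b j → i + m ≤ j + 1)

/-- Number of boundary-type-`(a,b)` structures on `[n]`. -/
noncomputable def tc (m a b n : ℕ) : ℕ := Nat.card {A : Arcs // BoundaryType m a b n A}

/-- Generating functions `T_i(x)`; types T₁,…,T₆ correspond to `(a,b)` =
(0,0), (1,0), (1,1), (2,0), (2,1), (2,2). -/
noncomputable def Tgf (m a b : ℕ) : PowerSeries ℚ := PowerSeries.mk fun n => (tc m a b n : ℚ)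

/-- Type G : `m`-reduced zigzag stack with `deg(1) ≤ 1`. -/
def TypeG (m n : ℕ) (A : Arcs) : Prop := MRed m n A ∧ deg A 1 ≤ 1

/-- Type H : `m`-reduced zigzag stack with `deg(1) ≤ 1` and `deg(n) ≤ 1`. -/
def TypeH (m n : ℕ) (A : Arcs) : Prop := MRed m n A ∧ deg A 1 ≤ 1 ∧ deg A n ≤ 1

noncomputable def gcnt (m n : ℕ) : ℕ := Nat.card {A : Arcs // TypeG m n A}
noncomputable def hcnt (m n : ℕ) : ℕ := Nat.card {A : Arcs // TypeH m n A}

/-- Generating function `G(x)`. -/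
noncomputable def Ggf (m : ℕ) : PowerSeries ℚ := PowerSeries.mk fun n => (gcnt m n : ℚ)

/-- Generating function `H(x)`. -/
noncomputable def Hgf (m : ℕ) : PowerSeries ℚ := PowerSeries.mk fun n => (hcnt m n : ℚ)

/-- The reduction map θ_m: replace each arc `(i,j)` by `(i, j−m+1)`. -/
def theta (m : ℕ) (A : Arcs) : Arcs := A.image fun p => (p.1, p.2 - m + 1)

/-- Relabel a structure whose arcs lie in `{c+1, …}` down by `c`. -/
def shiftDown (c : ℕ) (A : Arcs) : Arcs := A.image fun p => (p.1 - c, p.2 - c)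

/-- Conditions (1) and (2) of `m`-reducedness restricted to a set `J` of vertices. -/
def CondOn (m : ℕ) (A : Arcs) (J : Finset ℕ) : Prop :=
  (∀ i, i ∈ J → i + m - 1 ∈ J → ld A i + rd A (i + m - 1) ≤ 2) ∧
  (∀ i j, i ∈ J → j ∈ J → i < j → 0 < ld A i → 0 < rd A j → i + m ≤ j + 1)

/-! ### Auxiliary machinery -/

/-- Shift all arcs up by `c`. -/
def up (c : ℕ) (A : Arcs) : Arcs := A.image fun p => (p.1 + c, p.2 + c)

lemma up_inj (c : ℕ) : Function.Injective (fun p : ℕ × ℕ => (p.1 + c, p.2 + c)) := by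
  rintro ⟨a, b⟩ ⟨d, e⟩ h
  simp only [Prod.mk.injEq] at h
  have : a = d ∧ b = e := by omega
  simp [this.1, this.2]

lemma mem_up {c : ℕ} {A : Arcs} {q : ℕ × ℕ} :
    q ∈ up c A ↔ ∃ p ∈ A, (p.1 + c, p.2 + c) = q := by
  simp [up]

lemma ld_up (c : ℕ) (A : Arcs) (v : ℕ) : ld (up c A) (v + c) = ld A v := by
  classical
  unfold ld up
  rw [Finset.filter_image, Finset.card_image_of_injective _ (up_inj c)]
  congr 1
  apply Finset.filter_congr
  intro p _
  simp only [eq_iff_iff]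
  omega

lemma rd_up (c : ℕ) (A : Arcs) (v : ℕ) : rd (up c A) (v + c) = rd A v := by
  classical
  unfold rd up
  rw [Finset.filter_image, Finset.card_image_of_injective _ (up_inj c)]
  congr 1
  apply Finset.filter_congr
  intro p _
  simp only [eq_iff_iff]
  omega

lemma ld_up' {c v : ℕ} (A : Arcs) (h : c ≤ v) : ld (up c A) v = ld A (v - c) := by
  have := ld_up c A (v - c); rwa [Nat.sub_add_cancel h] at this

lemma rd_up' {c v : ℕ} (A : Arcs) (h : c ≤ v) : rd (up c A) v = rd A (v - c) := by
  have := rd_up c A (v - c); rwa [Nat.sub_add_cancel h] at this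

lemma ld_up_of_lt {c v : ℕ} (A : Arcs) (h : v < c) : ld (up c A) v = 0 := by
  classical
  unfold ld up
  rw [Finset.filter_image, Finset.card_image_of_injective _ (up_inj c)]
  rw [Finset.card_eq_zero, Finset.filter_eq_empty_iff]
  intro p _
  simp only
  omega

lemma rd_up_of_lt {c v : ℕ} (A : Arcs) (h : v < c) : rd (up c A) v = 0 := by
  classical
  unfold rd up
  rw [Finset.filter_image, Finset.card_image_of_injective _ (up_inj c)]
  rw [Finset.card_eq_zero, Finset.filter_eq_empty_iff]
  intro p _
  simp only
  omega

lemma ld_union {A B : Arcs} (h : Disjoint A B) (v : ℕ) :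
    ld (A ∪ B) v = ld A v + ld B v := by
  classical
  unfold ld
  rw [Finset.filter_union, Finset.card_union_of_disjoint]
  exact Finset.disjoint_filter_filter h

lemma rd_union {A B : Arcs} (h : Disjoint A B) (v : ℕ) :
    rd (A ∪ B) v = rd A v + rd B v := by
  classical
  unfold rd
  rw [Finset.filter_union, Finset.card_union_of_disjoint]
  exact Finset.disjoint_filter_filter h

lemma ld_insert {A : Arcs} {p : ℕ × ℕ} (h : p ∉ A) (v : ℕ) :
    ld (insert p A) v = (if p.2 = v then 1 else 0) + ld A v := by
  classical
  unfold ld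
  rw [Finset.filter_insert]
  split
  · rw [Finset.card_insert_of_notMem (by simp [h])]; omega
  · omega

lemma rd_insert {A : Arcs} {p : ℕ × ℕ} (h : p ∉ A) (v : ℕ) :
    rd (insert p A) v = (if p.1 = v then 1 else 0) + rd A v := by
  classical
  unfold rd
  rw [Finset.filter_insert]
  split
  · rw [Finset.card_insert_of_notMem (by simp [h])]; omega
  · omega

lemma shiftDown_up (c : ℕ) (A : Arcs) : shiftDown c (up c A) = A := by
  ext q
  simp only [shiftDown, up, Finset.image_image, Finset.mem_image, Function.comp]
  constructor
  · rintro ⟨p, hp, rfl⟩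
    simpa using hp
  · intro hq; exact ⟨q, hq, by simp⟩

lemma up_shiftDown {c : ℕ} {A : Arcs} (h : ∀ p ∈ A, c < p.1 ∧ c < p.2) :
    up c (shiftDown c A) = A := by
  ext q
  simp only [shiftDown, up, Finset.image_image, Finset.mem_image, Function.comp]
  constructor
  · rintro ⟨p, hp, rfl⟩
    have := h p hp
    have h1 : p.1 - c + c = p.1 := by omega
    have h2 : p.2 - c + c = p.2 := by omega
    simpa [h1, h2] using hp
  · intro hq
    refine ⟨q, hq, ?_⟩
    have := h q hq
    have h1 : q.1 - c + c = q.1 := by omega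
    have h2 : q.2 - c + c = q.2 := by omega
    simp [h1, h2]

lemma ld_zero_of_diagram {n : ℕ} {A : Arcs} (h : IsDiagram n A) {v : ℕ}
    (hv : v ≤ 1 ∨ n < v) : ld A v = 0 := by
  classical
  unfold ld
  rw [Finset.card_eq_zero, Finset.filter_eq_empty_iff]
  intro p hp
  have := h p hp
  omega

lemma rd_zero_of_diagram {n : ℕ} {A : Arcs} (h : IsDiagram n A) {v : ℕ}
    (hv : v = 0 ∨ n ≤ v) : rd A v = 0 := by
  classical
  unfold rd
  rw [Finset.card_eq_zero, Finset.filter_eq_empty_iff]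
  intro p hp
  have := h p hp
  omega

lemma ld_pos_iff {A : Arcs} {v : ℕ} : 0 < ld A v ↔ ∃ u, (u, v) ∈ A := by
  classical
  unfold ld
  rw [Finset.card_pos]
  constructor
  · rintro ⟨⟨a, b⟩, hp⟩
    simp only [Finset.mem_filter] at hp
    exact ⟨a, by rw [← hp.2]; exact hp.1⟩
  · rintro ⟨u, hu⟩
    exact ⟨(u, v), by simp [hu]⟩

lemma rd_pos_iff {A : Arcs} {v : ℕ} : 0 < rd A v ↔ ∃ w, (v, w) ∈ A := by
  classical
  unfold rd
  rw [Finset.card_pos]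
  constructor
  · rintro ⟨⟨a, b⟩, hp⟩
    simp only [Finset.mem_filter] at hp
    exact ⟨b, by rw [← hp.2]; exact hp.1⟩
  · rintro ⟨w, hw⟩
    exact ⟨(v, w), by simp [hw]⟩

lemma ld_pos_of_mem {A : Arcs} {u v : ℕ} (h : (u, v) ∈ A) : 0 < ld A v :=
  ld_pos_iff.2 ⟨u, h⟩

lemma rd_pos_of_mem {A : Arcs} {u v : ℕ} (h : (u, v) ∈ A) : 0 < rd A u :=
  rd_pos_iff.2 ⟨v, h⟩

/-! ### Reflection -/

/-- Reflect a diagram on `[l]`. -/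
def refl (l : ℕ) (A : Arcs) : Arcs := A.image fun p => (l + 1 - p.2, l + 1 - p.1)

lemma diagram_refl {l : ℕ} {A : Arcs} (h : IsDiagram l A) : IsDiagram l (refl l A) := by
  rintro q hq
  simp only [refl, Finset.mem_image] at hq
  obtain ⟨p, hp, rfl⟩ := hq
  have := h p hp
  simp only
  omega

lemma refl_refl {l : ℕ} {A : Arcs} (h : IsDiagram l A) : refl l (refl l A) = A := by
  ext q
  simp only [refl, Finset.image_image, Finset.mem_image, Function.comp]
  constructor
  · rintro ⟨p, hp, rfl⟩
    have := h p hp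
    have h1 : l + 1 - (l + 1 - p.1) = p.1 := by omega
    have h2 : l + 1 - (l + 1 - p.2) = p.2 := by omega
    simpa [h1, h2] using hp
  · intro hq
    refine ⟨q, hq, ?_⟩
    have := h q hq
    have h1 : l + 1 - (l + 1 - q.1) = q.1 := by omega
    have h2 : l + 1 - (l + 1 - q.2) = q.2 := by omega
    simp [h1, h2]

lemma ld_refl {l : ℕ} {A : Arcs} (h : IsDiagram l A) {v : ℕ} (h1 : 1 ≤ v) (h2 : v ≤ l) :
    ld (refl l A) v = rd A (l + 1 - v) := by
  classical
  unfold ld rd refl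
  rw [Finset.filter_image, Finset.card_image_of_injOn]
  · congr 1
    apply Finset.filter_congr
    intro p hp
    have := h p hp
    simp only [eq_iff_iff]
    omega
  · intro p hp q hq hpq
    simp only [Finset.coe_filter, Set.mem_setOf_eq] at hp hq
    have hp' := h p hp.1
    have hq' := h q hq.1
    simp only [Prod.mk.injEq] at hpq
    have : p.1 = q.1 ∧ p.2 = q.2 := by omega
    exact Prod.ext this.1 this.2

lemma rd_refl {l : ℕ} {A : Arcs} (h : IsDiagram l A) {v : ℕ} (h1 : 1 ≤ v) (h2 : v ≤ l) :
    rd (refl l A) v = ld A (l + 1 - v) := by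
  classical
  unfold ld rd refl
  rw [Finset.filter_image, Finset.card_image_of_injOn]
  · congr 1
    apply Finset.filter_congr
    intro p hp
    have := h p hp
    simp only [eq_iff_iff]
    omega
  · intro p hp q hq hpq
    simp only [Finset.coe_filter, Set.mem_setOf_eq] at hp hq
    have hp' := h p hp.1
    have hq' := h q hq.1
    simp only [Prod.mk.injEq] at hpq
    have : p.1 = q.1 ∧ p.2 = q.2 := by omega
    exact Prod.ext this.1 this.2

lemma MRed_refl {m l : ℕ} (hm : 2 ≤ m) {A : Arcs} (h : MRed m l A) :
    MRed m l (refl l A) := by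
  obtain ⟨⟨⟨hdiag, hcross⟩, hdeg, hboth⟩, hc1, hc2⟩ := h
  have hd' : IsDiagram l (refl l A) := diagram_refl hdiag
  refine ⟨⟨⟨hd', ?_⟩, ?_, ?_⟩, ?_, ?_⟩
  · -- noncrossing
    rintro p' hp' q' hq' hcr
    simp only [refl, Finset.mem_image] at hp' hq'
    obtain ⟨p, hp, rfl⟩ := hp'
    obtain ⟨q, hq, rfl⟩ := hq'
    have hpb := hdiag p hp
    have hqb := hdiag q hq
    apply hcross q hq p hp
    unfold Crossing at hcr ⊢
    simp only at hcr
    omega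
  · -- degrees
    intro v
    unfold deg
    by_cases hv : 1 ≤ v ∧ v ≤ l
    · rw [ld_refl hdiag hv.1 hv.2, rd_refl hdiag hv.1 hv.2]
      have := hdeg (l + 1 - v)
      unfold deg at this
      omega
    · rw [ld_zero_of_diagram hd' (by omega), rd_zero_of_diagram hd' (by omega)]
      omega
  · -- not both
    intro v hv
    by_cases hb : 1 ≤ v ∧ v ≤ l
    · rw [ld_refl hdiag hb.1 hb.2, rd_refl hdiag hb.1 hb.2] at hv
      exact hboth (l + 1 - v) ⟨hv.2, hv.1⟩
    · rw [ld_zero_of_diagram hd' (by omega)] at hv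
      omega
  · -- condition (1)
    intro i hi him
    have hil : i ≤ l := by omega
    have hb1 : 1 ≤ i + m - 1 := by omega
    have hb2 : i + m - 1 ≤ l := by omega
    rw [ld_refl hdiag hi hil, rd_refl hdiag hb1 hb2]
    have key := hc1 (l + 2 - m - i) (by omega) (by omega)
    have e1 : l + 2 - m - i + m - 1 = l + 1 - i := by omega
    have e2 : l + 1 - (i + m - 1) = l + 2 - m - i := by omega
    rw [e1] at key
    rw [e2]
    omega
  · -- condition (2)
    intro i j hi hij hjl hldi hrdj
    have hil : i ≤ l := by omega
    rw [ld_refl hdiag hi hil] at hldi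
    rw [rd_refl hdiag (by omega) hjl] at hrdj
    have key := hc2 (l + 1 - j) (l + 1 - i) (by omega) (by omega) (by omega) hrdj hldi
    omega

lemma empty_of_diagram_zero {A : Arcs} (h : IsDiagram 0 A) : A = ∅ := by
  ext p
  simp only [Finset.notMem_empty, iff_false]
  intro hp
  have := h p hp
  omega

lemma MRed_empty (m n : ℕ) : MRed m n (∅ : Arcs) := by
  refine ⟨⟨⟨?_, ?_⟩, ?_, ?_⟩, ?_, ?_⟩ <;>
    simp [IsDiagram, deg, ld, rd]

/-! ### Gluing and splitting at the arc from vertex 1 -/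

/-- Glue an inner structure `B` (on `[j-1]`, shifted to `{2,…,j}`), an outer structure `C`
(shifted to `{j+1,…}`) and the arc `(1,j)`. -/
def glue (j : ℕ) (B C : Arcs) : Arcs := insert (1, j) (up 1 B ∪ up j C)

/-- The inner part of a structure, relative to the arc `(1,j)`. -/
def inn (j : ℕ) (A : Arcs) : Arcs := shiftDown 1 (A.filter fun p => 2 ≤ p.1 ∧ p.2 ≤ j)

/-- The outer part of a structure, relative to the arc `(1,j)`. -/
def outer (j : ℕ) (A : Arcs) : Arcs := shiftDown j (A.filter fun p => j + 1 ≤ p.1)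

lemma mem_inn {j : ℕ} {A : Arcs} {q : ℕ × ℕ} :
    q ∈ inn j A ↔ ∃ p, (p ∈ A ∧ 2 ≤ p.1 ∧ p.2 ≤ j) ∧ (p.1 - 1, p.2 - 1) = q := by
  simp [inn, shiftDown, Finset.mem_image, Finset.mem_filter]

lemma mem_outer {j : ℕ} {A : Arcs} {q : ℕ × ℕ} :
    q ∈ outer j A ↔ ∃ p, (p ∈ A ∧ j + 1 ≤ p.1) ∧ (p.1 - j, p.2 - j) = q := by
  simp [outer, shiftDown, Finset.mem_image, Finset.mem_filter]

lemma mem_glue {j : ℕ} {B C : Arcs} {q : ℕ × ℕ} :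
    q ∈ glue j B C ↔
      q = (1, j) ∨ (∃ p ∈ B, (p.1 + 1, p.2 + 1) = q) ∨ ∃ p ∈ C, (p.1 + j, p.2 + j) = q := by
  simp [glue, up, Finset.mem_insert, Finset.mem_union, Finset.mem_image]

lemma not_mem_parts {j : ℕ} {B C : Arcs} (hB : IsDiagram (j - 1) B)
    (hj : 2 ≤ j) : (1, j) ∉ up 1 B ∪ up j C := by
  intro h
  rcases Finset.mem_union.1 h with h | h <;> rw [mem_up] at h
  · obtain ⟨p, hp, he⟩ := h
    have := hB p hp
    simp only [Prod.mk.injEq] at he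
    omega
  · obtain ⟨p, hp, he⟩ := h
    simp only [Prod.mk.injEq] at he
    omega

lemma disj_parts {j l : ℕ} {B C : Arcs} (hB : IsDiagram (j - 1) B) (hC : IsDiagram l C)
    (hj : 2 ≤ j) : Disjoint (up 1 B) (up j C) := by
  rw [Finset.disjoint_left]
  intro q hqB hqC
  rw [mem_up] at hqB hqC
  obtain ⟨p, hp, he⟩ := hqB
  obtain ⟨p', hp', he'⟩ := hqC
  have h1 := hB p hp
  have h2 := hC p' hp'
  subst he
  simp only [Prod.mk.injEq] at he'
  omega

lemma ld_glue {j k l : ℕ} {B C : Arcs} (hB : IsDiagram k B) (hC : IsDiagram l C)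
    (hj : 2 ≤ j) (hkj : k ≤ j - 1) (v : ℕ) :
    ld (glue j B C) v = (if v = j then 1 else 0) + ld B (v - 1) + ld C (v - j) := by
  have hBd : IsDiagram (j - 1) B := fun p hp => by have := hB p hp; omega
  rw [glue, ld_insert (not_mem_parts hBd hj),
    ld_union (disj_parts hBd hC hj)]
  have e1 : ld (up 1 B) v = ld B (v - 1) := by
    rcases Nat.lt_or_ge v 1 with h | h
    · rw [ld_up_of_lt _ h]
      have : v = 0 := by omega
      subst this
      exact (ld_zero_of_diagram hB (by omega)).symm
    · exact ld_up' B h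
  have e2 : ld (up j C) v = ld C (v - j) := by
    rcases Nat.lt_or_ge v j with h | h
    · rw [ld_up_of_lt _ h]
      have : v - j = 0 := by omega
      rw [this]
      exact (ld_zero_of_diagram hC (by omega)).symm
    · exact ld_up' C h
  simp only [e1, e2]
  by_cases h : v = j
  · subst h
    simp
    ring
  · rw [if_neg (fun hh => h hh.symm), if_neg h]
    ring

lemma rd_glue {j k l : ℕ} {B C : Arcs} (hB : IsDiagram k B) (hC : IsDiagram l C)
    (hj : 2 ≤ j) (hkj : k ≤ j - 1) (v : ℕ) :
    rd (glue j B C) v = (if v = 1 then 1 else 0) + rd B (v - 1) + rd C (v - j) := by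
  have hBd : IsDiagram (j - 1) B := fun p hp => by have := hB p hp; omega
  rw [glue, rd_insert (not_mem_parts hBd hj),
    rd_union (disj_parts hBd hC hj)]
  have e1 : rd (up 1 B) v = rd B (v - 1) := by
    rcases Nat.lt_or_ge v 1 with h | h
    · rw [rd_up_of_lt _ h]
      have : v = 0 := by omega
      subst this
      exact (rd_zero_of_diagram hB (by omega)).symm
    · exact rd_up' B h
  have e2 : rd (up j C) v = rd C (v - j) := by
    rcases Nat.lt_or_ge v j with h | h
    · rw [rd_up_of_lt _ h]
      have : v - j = 0 := by omega
      rw [this]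
      exact (rd_zero_of_diagram hC (by omega)).symm
    · exact rd_up' C h
  simp only [e1, e2]
  by_cases h : v = 1
  · subst h
    simp
    ring
  · rw [if_neg (fun hh => h hh.symm), if_neg h]
    ring

lemma extLD_zero {A : Arcs} {l a : ℕ} : extLD A l a 0 = a := by simp [extLD]

lemma extLD_mid {A : Arcs} {l a v : ℕ} (h1 : 1 ≤ v) (h2 : v ≤ l) : extLD A l a v = ld A v := by
  unfold extLD
  rw [if_neg (by omega), if_neg (by omega)]

lemma extRD_mid {A : Arcs} {l b v : ℕ} (h1 : 1 ≤ v) (h2 : v ≤ l) : extRD A l b v = rd A v := by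
  unfold extRD
  rw [if_neg (by omega), if_neg (by omega)]

lemma extRD_last {A : Arcs} {l b : ℕ} : extRD A l b (l + 1) = b := by
  unfold extRD
  rw [if_neg (by omega), if_pos rfl]

lemma glue_master {m n j a : ℕ} {B C : Arcs} (hm : 2 ≤ m) (hj : 2 ≤ j) (hjn : j ≤ n)
    (ha1 : 1 ≤ a) (ha2 : a ≤ 2)
    (hB : MRed m (j - 1) B) (hBl : ld B (j - 1) = a - 1)
    (hC : BoundaryType m a 0 (n - j) C) :
    MRed m n (glue j B C) ∧ rd (glue j B C) 1 = 1 ∧ (1, j) ∈ glue j B C ∧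
      ld (glue j B C) j = a := by
  obtain ⟨⟨⟨hBd, hBcr⟩, hBdeg, hBboth⟩, hB1, hB2⟩ := hB
  obtain ⟨⟨⟨⟨hCd, hCcr⟩, hCdeg, hCboth⟩, hC1, hC2⟩, hE1, hE2⟩ := hC
  set l := n - j with hl
  have hld : ∀ v, ld (glue j B C) v = (if v = j then 1 else 0) + ld B (v - 1) + ld C (v - j) :=
    ld_glue hBd hCd hj le_rfl
  have hrd : ∀ v, rd (glue j B C) v = (if v = 1 then 1 else 0) + rd B (v - 1) + rd C (v - j) :=
    rd_glue hBd hCd hj le_rfl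
  have hB0l : ∀ w, j - 1 < w → ld B w = 0 := fun w hw => ld_zero_of_diagram hBd (Or.inr hw)
  have hB0r : ∀ w, j - 1 ≤ w → rd B w = 0 := fun w hw => rd_zero_of_diagram hBd (Or.inr hw)
  have hB00 : ld B 0 = 0 := ld_zero_of_diagram hBd (Or.inl (by omega))
  have hB00r : rd B 0 = 0 := rd_zero_of_diagram hBd (Or.inl rfl)
  have hC0l : ld C 0 = 0 := ld_zero_of_diagram hCd (Or.inl (by omega))
  have hC0r : rd C 0 = 0 := rd_zero_of_diagram hCd (Or.inl rfl)
  have hCrd_far : ∀ w, 1 ≤ w → w ≤ l → 0 < rd C w → m ≤ w + 1 := by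
    intro w h1 h2 hw
    have := hE2 0 w (by omega) (by omega) (by rw [extLD_zero]; omega)
      (by rw [extRD_mid h1 h2]; omega)
    omega
  -- pointwise degree evaluations
  have hld1 : ld (glue j B C) 1 = 0 := by
    rw [hld, if_neg (by omega)]
    have h2 : (1 : ℕ) - j = 0 := by omega
    rw [h2, hC0l, hB00]
  have hrd1A : rd (glue j B C) 1 = 1 := by
    rw [hrd, if_pos rfl]
    have h2 : (1 : ℕ) - j = 0 := by omega
    rw [h2, hC0r, hB00r]
  have hldja : ld (glue j B C) j = a := by
    rw [hld, if_pos rfl, hBl]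
    have h2 : j - j = 0 := by omega
    rw [h2, hC0l]
    omega
  have hrdj0 : rd (glue j B C) j = 0 := by
    rw [hrd, if_neg (by omega), hB0r (j - 1) le_rfl]
    have h2 : j - j = 0 := by omega
    rw [h2, hC0r]
  have hldAi : ∀ i, 2 ≤ i → i ≤ j - 1 → ld (glue j B C) i = ld B (i - 1) := by
    intro i h1 h2
    rw [hld, if_neg (by omega)]
    have h3 : i - j = 0 := by omega
    rw [h3, hC0l]
    omega
  have hrdAi : ∀ i, 2 ≤ i → i ≤ j → rd (glue j B C) i = rd B (i - 1) := by
    intro i h1 h2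
    rw [hrd, if_neg (by omega)]
    have h3 : i - j = 0 := by omega
    rw [h3, hC0r]
    omega
  have hldAk : ∀ k, j + 1 ≤ k → ld (glue j B C) k = ld C (k - j) := by
    intro k hk
    rw [hld, if_neg (by omega), hB0l (k - 1) (by omega)]
    omega
  have hrdAk : ∀ k, j + 1 ≤ k → rd (glue j B C) k = rd C (k - j) := by
    intro k hk
    rw [hrd, if_neg (by omega), hB0r (k - 1) (by omega)]
    omega
  -- degrees bounded
  have hdegA : ∀ v, deg (glue j B C) v ≤ 2 := by
    intro v
    unfold deg
    by_cases hvj : v = j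
    · subst hvj
      rw [hldja, hrdj0]
      omega
    · by_cases hvb : v ≤ j - 1
      · by_cases hv1 : v ≤ 1
        · have e1 : ld (glue j B C) v ≤ ld B (v - 1) := by
            rw [hld, if_neg hvj]
            have h3 : v - j = 0 := by omega
            rw [h3, hC0l]
            omega
          have e2 : rd (glue j B C) v ≤ (if v = 1 then 1 else 0) + rd B (v - 1) := by
            rw [hrd]
            have h3 : v - j = 0 := by omega
            rw [h3, hC0r]
            split_ifs <;> omega
          have h4 : v - 1 = 0 := by omega
          rw [h4] at e1 e2
          rw [hB00] at e1
          rw [hB00r] at e2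
          split_ifs at e2 <;> omega
        · rw [hldAi v (by omega) hvb, hrdAi v (by omega) (by omega)]
          have := hBdeg (v - 1)
          unfold deg at this
          omega
      · rw [hldAk v (by omega), hrdAk v (by omega)]
        have := hCdeg (v - j)
        unfold deg at this
        omega
  -- no vertex has both
  have hbothA : ∀ v, ¬(1 ≤ ld (glue j B C) v ∧ 1 ≤ rd (glue j B C) v) := by
    intro v hv
    by_cases hvj : v = j
    · subst hvj
      rw [hrdj0] at hv
      omega
    · by_cases hvb : v ≤ j - 1
      · by_cases hv1 : v ≤ 1
        · have e1 : ld (glue j B C) v = 0 := by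
            rw [hld, if_neg hvj]
            have h3 : v - j = 0 := by omega
            have h4 : v - 1 = 0 := by omega
            rw [h3, h4, hC0l, hB00]
          omega
        · rw [hldAi v (by omega) hvb, hrdAi v (by omega) (by omega)] at hv
          exact hBboth (v - 1) hv
      · rw [hldAk v (by omega), hrdAk v (by omega)] at hv
        exact hCboth (v - j) hv
  refine ⟨⟨⟨⟨?_, ?_⟩, hdegA, hbothA⟩, ?_, ?_⟩, hrd1A, Finset.mem_insert_self _ _, hldja⟩
  · -- diagram
    intro q hq
    rcases mem_glue.1 hq with h | ⟨p, hp, h⟩ | ⟨p, hp, h⟩ <;> subst h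
    · simp only
      omega
    · have := hBd p hp
      simp only
      omega
    · have := hCd p hp
      simp only
      omega
  · -- noncrossing
    intro p hp q hq hcr
    rcases mem_glue.1 hp with h1 | ⟨b, hb, h1⟩ | ⟨c, hc, h1⟩ <;>
      rcases mem_glue.1 hq with h2 | ⟨b', hb', h2⟩ | ⟨c', hc', h2⟩ <;>
      subst h1 <;> subst h2 <;> unfold Crossing at hcr <;> simp only at hcr
    · omega
    · have := hBd b' hb'
      omega
    · have := hCd c' hc'
      omega
    · have := hBd b hb
      omega
    · exact hBcr b hb b' hb' (by unfold Crossing; omega)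
    · have := hBd b hb
      have := hCd c' hc'
      omega
    · have := hCd c hc
      omega
    · have := hCd c hc
      have := hBd b' hb'
      omega
    · exact hCcr c hc c' hc' (by unfold Crossing; omega)
  · -- condition (1)
    intro i hi hin
    by_cases hi1 : i = 1
    · subst hi1
      have h3 := hdegA (1 + m - 1)
      unfold deg at h3
      rw [hld1]
      omega
    · by_cases hib : i ≤ j - 1
      · rw [hldAi i (by omega) hib]
        by_cases hip : i + m - 1 ≤ j
        · rw [hrdAi (i + m - 1) (by omega) hip]
          by_cases hip' : i + m - 1 ≤ j - 1
          · have := hB1 (i - 1) (by omega) (by omega)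
            have he : i - 1 + m - 1 = i + m - 1 - 1 := by omega
            rw [he] at this
            exact this
          · -- i + m - 1 = j
            have he : i + m - 1 - 1 = j - 1 := by omega
            rw [he, hB0r (j - 1) le_rfl]
            have := hBdeg (i - 1)
            unfold deg at this
            omega
        · -- i + m - 1 ≥ j + 1
          rw [hrdAk (i + m - 1) (by omega)]
          have hrC : rd C (i + m - 1 - j) = 0 := by
            by_contra hne
            have hpos : 0 < rd C (i + m - 1 - j) := Nat.pos_of_ne_zero hne
            have := hCrd_far (i + m - 1 - j) (by omega) (by omega) hpos
            omega
          rw [hrC]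
          have := hBdeg (i - 1)
          unfold deg at this
          omega
      · by_cases hij2 : i = j
        · rw [hij2, hldja, hrdAk (j + m - 1) (by omega)]
          have hml : m - 1 ≤ l := by omega
          have he1 := hE1 0 (by omega)
          rw [extLD_zero] at he1
          have h4 : 0 + m - 1 = m - 1 := by omega
          rw [h4, extRD_mid (by omega) hml] at he1
          have h5 : j + m - 1 - j = m - 1 := by omega
          rw [h5]
          exact he1
        · rw [hldAk i (by omega), hrdAk (i + m - 1) (by omega)]
          have := hC1 (i - j) (by omega) (by omega)
          have he : i - j + m - 1 = i + m - 1 - j := by omega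
          rw [he] at this
          exact this
  · -- condition (2)
    intro i k hi hik hkn hldpos hrdpos
    by_cases hi1 : i = 1
    · subst hi1
      rw [hld1] at hldpos
      omega
    · by_cases hib : i ≤ j - 1
      · rw [hldAi i (by omega) hib] at hldpos
        by_cases hkb : k ≤ j - 1
        · rw [hrdAi k (by omega) (by omega)] at hrdpos
          have := hB2 (i - 1) (k - 1) (by omega) (by omega) (by omega) hldpos hrdpos
          omega
        · by_cases hkj : k = j
          · subst hkj
            rw [hrdj0] at hrdpos
            omega
          · rw [hrdAk k (by omega)] at hrdpos
            have := hCrd_far (k - j) (by omega) (by omega) hrdpos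
            omega
      · by_cases hij2 : i = j
        · rw [hij2]
          rw [hrdAk k (by omega)] at hrdpos
          have := hCrd_far (k - j) (by omega) (by omega) hrdpos
          omega
        · rw [hldAk i (by omega)] at hldpos
          rw [hrdAk k (by omega)] at hrdpos
          have := hC2 (i - j) (k - j) (by omega) (by omega) (by omega) hldpos hrdpos
          omega

/-- The right endpoint of the (unique) arc from vertex 1. -/
def arcTo (A : Arcs) : ℕ := A.sup fun p => if p.1 = 1 then p.2 else 0

lemma rd_one_unique {A : Arcs} (h : rd A 1 = 1) {j : ℕ} (hj : (1, j) ∈ A) :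
    ∀ p ∈ A, p.1 = 1 → p = (1, j) := by
  unfold rd at h
  obtain ⟨x, hx⟩ := Finset.card_eq_one.1 h
  have h1 : (1, j) ∈ A.filter (fun p => p.1 = 1) := by simp [hj]
  rw [hx, Finset.mem_singleton] at h1
  intro p hp hp1
  have h2 : p ∈ A.filter (fun p => p.1 = 1) := by simp [hp, hp1]
  rw [hx, Finset.mem_singleton] at h2
  rw [h2, ← h1]

lemma exists_arc_of_rd_one {A : Arcs} (h : rd A 1 = 1) : ∃ j, (1, j) ∈ A := by
  unfold rd at h
  obtain ⟨x, hx⟩ := Finset.card_eq_one.1 h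
  have hxx : x ∈ A.filter (fun p => p.1 = 1) := by rw [hx]; exact Finset.mem_singleton_self x
  rw [Finset.mem_filter] at hxx
  obtain ⟨hxA, hx1⟩ := hxx
  refine ⟨x.2, ?_⟩
  have : (1, x.2) = x := by
    rw [← hx1]
  rw [this]
  exact hxA

lemma arcTo_eq {A : Arcs} (h : rd A 1 = 1) {j : ℕ} (hj : (1, j) ∈ A) : arcTo A = j := by
  apply le_antisymm
  · apply Finset.sup_le
    intro p hp
    by_cases h1 : p.1 = 1
    · rw [if_pos h1]
      have := rd_one_unique h hj p hp h1
      rw [this]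
    · rw [if_neg h1]
      exact Nat.zero_le _
  · have := Finset.le_sup (f := fun p : ℕ × ℕ => if p.1 = 1 then p.2 else 0) hj
    exact this

lemma split_master {m n : ℕ} (hm : 2 ≤ m) {A : Arcs} (hA : MRed m n A)
    (hrd1 : rd A 1 = 1) {j : ℕ} (hjA : (1, j) ∈ A) :
    2 ≤ j ∧ j ≤ n ∧ 1 ≤ ld A j ∧ ld A j ≤ 2 ∧
      MRed m (j - 1) (inn j A) ∧ ld (inn j A) (j - 1) = ld A j - 1 ∧
      BoundaryType m (ld A j) 0 (n - j) (outer j A) ∧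
      glue j (inn j A) (outer j A) = A := by
  obtain ⟨⟨⟨hAd, hAcr⟩, hAdeg, hAboth⟩, hA1, hA2⟩ := hA
  have hjb := hAd _ hjA
  simp only at hjb
  have hj2 : 2 ≤ j := by omega
  have hjn : j ≤ n := by omega
  have huniq := rd_one_unique hrd1 hjA
  have hclass : ∀ p ∈ A, p = (1, j) ∨ (2 ≤ p.1 ∧ p.2 ≤ j) ∨ (j + 1 ≤ p.1) := by
    intro p hp
    have hb := hAd p hp
    by_cases h1 : p.1 = 1
    · exact Or.inl (huniq p hp h1)
    · right
      by_cases h2 : p.2 ≤ j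
      · exact Or.inl ⟨by omega, h2⟩
      · right
        by_contra hcon
        rcases Nat.lt_or_ge p.1 j with hlt | hge
        · exact hAcr (1, j) hjA p hp (by unfold Crossing; simp only; omega)
        · have hpj : p.1 = j := by omega
          have hldj : 0 < ld A j := ld_pos_of_mem hjA
          have hp' : (p.1, p.2) ∈ A := by simpa using hp
          rw [hpj] at hp'
          exact hAboth j ⟨hldj, rd_pos_of_mem hp'⟩
  have hup1 : up 1 (inn j A) = A.filter (fun p => 2 ≤ p.1 ∧ p.2 ≤ j) := by
    unfold inn
    apply up_shiftDown
    intro p hp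
    rw [Finset.mem_filter] at hp
    have := hAd p hp.1
    omega
  have hupj : up j (outer j A) = A.filter (fun p => j + 1 ≤ p.1) := by
    unfold outer
    apply up_shiftDown
    intro p hp
    rw [Finset.mem_filter] at hp
    have := hAd p hp.1
    omega
  have hglue : glue j (inn j A) (outer j A) = A := by
    unfold glue
    rw [hup1, hupj]
    ext q
    simp only [Finset.mem_insert, Finset.mem_union, Finset.mem_filter]
    constructor
    · rintro (rfl | ⟨hq, _⟩ | ⟨hq, _⟩)
      · exact hjA
      · exact hq
      · exact hq
    · intro hq
      rcases hclass q hq with h | h | h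
      · exact Or.inl h
      · exact Or.inr (Or.inl ⟨hq, h⟩)
      · exact Or.inr (Or.inr ⟨hq, h⟩)
  have hBd : IsDiagram (j - 1) (inn j A) := by
    intro q hq
    rw [mem_inn] at hq
    obtain ⟨p, ⟨hp, h1, h2⟩, he⟩ := hq
    subst he
    have := hAd p hp
    simp only
    omega
  have hCd : IsDiagram (n - j) (outer j A) := by
    intro q hq
    rw [mem_outer] at hq
    obtain ⟨p, ⟨hp, h1⟩, he⟩ := hq
    subst he
    have := hAd p hp
    simp only
    omega
  have hld : ∀ v, ld A v =
      (if v = j then 1 else 0) + ld (inn j A) (v - 1) + ld (outer j A) (v - j) := by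
    intro v
    conv_lhs => rw [← hglue]
    exact ld_glue hBd hCd hj2 le_rfl v
  have hrd : ∀ v, rd A v =
      (if v = 1 then 1 else 0) + rd (inn j A) (v - 1) + rd (outer j A) (v - j) := by
    intro v
    conv_lhs => rw [← hglue]
    exact rd_glue hBd hCd hj2 le_rfl v
  have hB0l : ∀ w, j - 1 < w → ld (inn j A) w = 0 :=
    fun w hw => ld_zero_of_diagram hBd (Or.inr hw)
  have hB0r : ∀ w, j - 1 ≤ w → rd (inn j A) w = 0 :=
    fun w hw => rd_zero_of_diagram hBd (Or.inr hw)
  have hB00 : ld (inn j A) 0 = 0 := ld_zero_of_diagram hBd (Or.inl (by omega))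
  have hB00r : rd (inn j A) 0 = 0 := rd_zero_of_diagram hBd (Or.inl rfl)
  have hC0l : ld (outer j A) 0 = 0 := ld_zero_of_diagram hCd (Or.inl (by omega))
  have hC0r : rd (outer j A) 0 = 0 := rd_zero_of_diagram hCd (Or.inl rfl)
  have hC0l' : ∀ w, n - j < w → ld (outer j A) w = 0 :=
    fun w hw => ld_zero_of_diagram hCd (Or.inr hw)
  have hBldw : ∀ w, 1 ≤ w → w ≤ j - 2 → ld (inn j A) w = ld A (w + 1) := by
    intro w h1 h2
    rw [hld (w + 1), if_neg (by omega)]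
    have e1 : w + 1 - 1 = w := by omega
    have e2 : w + 1 - j = 0 := by omega
    rw [e1, e2, hC0l]
    omega
  have hBldj : ld (inn j A) (j - 1) = ld A j - 1 := by
    rw [hld j, if_pos rfl]
    have e2 : j - j = 0 := by omega
    rw [e2, hC0l]
    omega
  have hBrdw : ∀ w, 1 ≤ w → w ≤ j - 1 → rd (inn j A) w = rd A (w + 1) := by
    intro w h1 h2
    rw [hrd (w + 1), if_neg (by omega)]
    have e1 : w + 1 - 1 = w := by omega
    have e2 : w + 1 - j = 0 := by omega
    rw [e1, e2, hC0r]
    omega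
  have hCldw : ∀ w, 1 ≤ w → ld (outer j A) w = ld A (w + j) := by
    intro w h1
    rw [hld (w + j), if_neg (by omega), hB0l (w + j - 1) (by omega)]
    have e2 : w + j - j = w := by omega
    rw [e2]
    omega
  have hCrdw : ∀ w, 1 ≤ w → rd (outer j A) w = rd A (w + j) := by
    intro w h1
    rw [hrd (w + j), if_neg (by omega), hB0r (w + j - 1) (by omega)]
    have e2 : w + j - j = w := by omega
    rw [e2]
    omega
  have hldApos : 1 ≤ ld A j := ld_pos_of_mem hjA
  have hldAle : ld A j ≤ 2 := by
    have := hAdeg j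
    unfold deg at this
    omega
  -- MRed for the inner part
  have hBM : MRed m (j - 1) (inn j A) := by
    refine ⟨⟨⟨hBd, ?_⟩, ?_, ?_⟩, ?_, ?_⟩
    · intro p hp q hq hcr
      rw [mem_inn] at hp hq
      obtain ⟨p', ⟨hp', hb1, hb2⟩, he⟩ := hp
      obtain ⟨q', ⟨hq', hb1', hb2'⟩, he'⟩ := hq
      subst he
      subst he'
      have c1 := hAd p' hp'
      have c2 := hAd q' hq'
      exact hAcr p' hp' q' hq' (by unfold Crossing at hcr ⊢; simp only at hcr; omega)
    · intro v
      unfold deg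
      by_cases hv0 : v = 0
      · rw [hv0, hB00, hB00r]
        omega
      · by_cases hvj : v ≤ j - 2
        · rw [hBldw v (by omega) hvj, hBrdw v (by omega) (by omega)]
          have := hAdeg (v + 1)
          unfold deg at this
          omega
        · by_cases hvj1 : v = j - 1
          · rw [hvj1, hBldj, hBrdw (j - 1) (by omega) le_rfl]
            have := hAdeg j
            unfold deg at this
            have e : j - 1 + 1 = j := by omega
            rw [e]
            omega
          · rw [hB0l v (by omega), hB0r v (by omega)]
            omega
    · intro v hv
      by_cases hv0 : v = 0
      · rw [hv0, hB00] at hv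
        omega
      · by_cases hvj : v ≤ j - 2
        · rw [hBldw v (by omega) hvj, hBrdw v (by omega) (by omega)] at hv
          exact hAboth (v + 1) hv
        · by_cases hvj1 : v = j - 1
          · rw [hvj1, hBldj, hBrdw (j - 1) (by omega) le_rfl] at hv
            have e : j - 1 + 1 = j := by omega
            rw [e] at hv
            exact hAboth j ⟨by omega, hv.2⟩
          · rw [hB0l v (by omega)] at hv
            omega
    · intro i hi him
      rw [hBldw i hi (by omega), hBrdw (i + m - 1) (by omega) (by omega)]
      have := hA1 (i + 1) (by omega) (by omega)
      have e : i + 1 + m - 1 = i + m - 1 + 1 := by omega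
      rw [e] at this
      exact this
    · intro i k hi hik hkb hpos1 hpos2
      rw [hBldw i hi (by omega)] at hpos1
      rw [hBrdw k (by omega) hkb] at hpos2
      have := hA2 (i + 1) (k + 1) (by omega) (by omega) (by omega) hpos1 hpos2
      omega
  -- MRed for the outer part
  have hCM : MRed m (n - j) (outer j A) := by
    refine ⟨⟨⟨hCd, ?_⟩, ?_, ?_⟩, ?_, ?_⟩
    · intro p hp q hq hcr
      rw [mem_outer] at hp hq
      obtain ⟨p', ⟨hp', hb1⟩, he⟩ := hp
      obtain ⟨q', ⟨hq', hb1'⟩, he'⟩ := hq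
      subst he
      subst he'
      have c1 := hAd p' hp'
      have c2 := hAd q' hq'
      exact hAcr p' hp' q' hq' (by unfold Crossing at hcr ⊢; simp only at hcr; omega)
    · intro v
      unfold deg
      by_cases hv0 : v = 0
      · rw [hv0, hC0l, hC0r]
        omega
      · by_cases hvl : v ≤ n - j
        · rw [hCldw v (by omega), hCrdw v (by omega)]
          have := hAdeg (v + j)
          unfold deg at this
          omega
        · rw [hC0l' v (by omega), rd_zero_of_diagram hCd (Or.inr (by omega))]
          omega
    · intro v hv
      by_cases hv0 : v = 0
      · rw [hv0, hC0l] at hv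
        omega
      · by_cases hvl : v ≤ n - j
        · rw [hCldw v (by omega), hCrdw v (by omega)] at hv
          exact hAboth (v + j) hv
        · rw [hC0l' v (by omega)] at hv
          omega
    · intro i hi him
      rw [hCldw i hi, hCrdw (i + m - 1) (by omega)]
      have := hA1 (i + j) (by omega) (by omega)
      have e : i + j + m - 1 = i + m - 1 + j := by omega
      rw [e] at this
      exact this
    · intro i k hi hik hkb hpos1 hpos2
      rw [hCldw i hi] at hpos1
      rw [hCrdw k (by omega)] at hpos2
      have := hA2 (i + j) (k + j) (by omega) (by omega) (by omega) hpos1 hpos2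
      omega
  obtain ⟨⟨⟨_, hCcr⟩, hCdeg, hCboth⟩, hCc1, hCc2⟩ := hCM
  refine ⟨hj2, hjn, hldApos, hldAle, hBM, hBldj, ⟨⟨⟨⟨hCd, hCcr⟩, hCdeg, hCboth⟩, hCc1, hCc2⟩,
    ?_, ?_⟩, hglue⟩
  · -- extended condition (1)
    intro i him
    by_cases hi0 : i = 0
    · rw [hi0, extLD_zero]
      have e : 0 + m - 1 = m - 1 := by omega
      rw [e]
      by_cases hml : m - 1 ≤ n - j
      · rw [extRD_mid (by omega) hml, hCrdw (m - 1) (by omega)]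
        have := hA1 j (by omega) (by omega)
        have e2 : j + m - 1 = m - 1 + j := by omega
        rw [e2] at this
        exact this
      · have e2 : m - 1 = n - j + 1 := by omega
        rw [e2, extRD_last]
        omega
    · have hi1 : 1 ≤ i := by omega
      have hil : i ≤ n - j := by omega
      rw [extLD_mid hi1 hil]
      by_cases hml : i + m - 1 ≤ n - j
      · rw [extRD_mid (by omega) hml]
        exact hCc1 i hi1 (by omega)
      · have e2 : i + m - 1 = n - j + 1 := by omega
        rw [e2, extRD_last]
        have := hCdeg i
        unfold deg at this
        omega
  · -- extended condition (2)
    intro i k hik hkb hpos1 hpos2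
    have hk0 : k ≠ 0 := by
      intro h
      rw [h] at hpos2
      simp [extRD] at hpos2
    have hkl1 : k ≠ n - j + 1 := by
      intro h
      rw [h, extRD_last] at hpos2
      omega
    have hkl : k ≤ n - j := by omega
    rw [extRD_mid (by omega) hkl, hCrdw k (by omega)] at hpos2
    by_cases hi0 : i = 0
    · have := hA2 j (k + j) (by omega) (by omega) (by omega) hldApos hpos2
      omega
    · have hil : i ≤ n - j := by
        by_contra hcon
        have : extLD (outer j A) (n - j) (ld A j) i = 0 := by
          unfold extLD
          rw [if_neg hi0]
          by_cases h : i = n - j + 1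
          · rw [if_pos h]
          · rw [if_neg h, hC0l' i (by omega)]
        omega
      rw [extLD_mid (by omega) hil, hCldw i (by omega)] at hpos1
      have := hA2 (i + j) (k + j) (by omega) (by omega) (by omega) hpos1 hpos2
      omega

lemma MRed_up1 {m l : ℕ} {B : Arcs} (hBd : IsDiagram l B) :
    MRed m (l + 1) (up 1 B) ↔ MRed m l B := by
  have hldu : ∀ v, ld (up 1 B) v = ld B (v - 1) := by
    intro v
    rcases Nat.eq_zero_or_pos v with h | h
    · subst h
      rw [ld_up_of_lt _ (by omega)]
      exact (ld_zero_of_diagram hBd (by omega)).symm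
    · exact ld_up' B h
  have hrdu : ∀ v, rd (up 1 B) v = rd B (v - 1) := by
    intro v
    rcases Nat.eq_zero_or_pos v with h | h
    · subst h
      rw [rd_up_of_lt _ (by omega)]
      exact (rd_zero_of_diagram hBd (by omega)).symm
    · exact rd_up' B h
  have hB00 : ld B 0 = 0 := ld_zero_of_diagram hBd (by omega)
  have hB00r : rd B 0 = 0 := rd_zero_of_diagram hBd (by omega)
  constructor
  · rintro ⟨⟨⟨hUd, hUcr⟩, hUdeg, hUboth⟩, hU1, hU2⟩
    refine ⟨⟨⟨hBd, ?_⟩, ?_, ?_⟩, ?_, ?_⟩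
    · intro p hp q hq hcr
      have hp' : (p.1 + 1, p.2 + 1) ∈ up 1 B := mem_up.2 ⟨p, hp, rfl⟩
      have hq' : (q.1 + 1, q.2 + 1) ∈ up 1 B := mem_up.2 ⟨q, hq, rfl⟩
      exact hUcr _ hp' _ hq' (by unfold Crossing at hcr ⊢; simp only; omega)
    · intro v
      have := hUdeg (v + 1)
      unfold deg at this ⊢
      rw [hldu (v + 1), hrdu (v + 1)] at this
      simpa using this
    · intro v hv
      apply hUboth (v + 1)
      rw [hldu (v + 1), hrdu (v + 1)]
      simpa using hv
    · intro i hi him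
      have := hU1 (i + 1) (by omega) (by omega)
      rw [hldu (i + 1), hrdu (i + 1 + m - 1)] at this
      have e1 : i + 1 - 1 = i := by omega
      have e2 : i + 1 + m - 1 - 1 = i + m - 1 := by omega
      rw [e1, e2] at this
      exact this
    · intro i k hi hik hkl hpos1 hpos2
      have h1 : 0 < ld (up 1 B) (i + 1) := by
        rw [hldu (i + 1)]
        simpa using hpos1
      have h2 : 0 < rd (up 1 B) (k + 1) := by
        rw [hrdu (k + 1)]
        simpa using hpos2
      have := hU2 (i + 1) (k + 1) (by omega) (by omega) (by omega) h1 h2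
      omega
  · rintro ⟨⟨⟨_, hBcr⟩, hBdeg, hBboth⟩, hB1, hB2⟩
    refine ⟨⟨⟨?_, ?_⟩, ?_, ?_⟩, ?_, ?_⟩
    · intro q hq
      rw [mem_up] at hq
      obtain ⟨p, hp, he⟩ := hq
      subst he
      have := hBd p hp
      simp only
      omega
    · intro p hp q hq hcr
      rw [mem_up] at hp hq
      obtain ⟨p', hp', he⟩ := hp
      obtain ⟨q', hq', he'⟩ := hq
      subst he
      subst he'
      exact hBcr p' hp' q' hq' (by unfold Crossing at hcr ⊢; simp only at hcr; omega)
    · intro v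
      unfold deg
      rw [hldu v, hrdu v]
      have := hBdeg (v - 1)
      unfold deg at this
      omega
    · intro v hv
      rw [hldu v, hrdu v] at hv
      exact hBboth (v - 1) hv
    · intro i hi him
      rw [hldu i, hrdu (i + m - 1)]
      by_cases hi1 : i = 1
      · subst hi1
        have e1 : (1 : ℕ) - 1 = 0 := by omega
        rw [e1, hB00]
        have := hBdeg (1 + m - 1 - 1)
        unfold deg at this
        omega
      · have := hB1 (i - 1) (by omega) (by omega)
        have e : i - 1 + m - 1 = i + m - 1 - 1 := by omega
        rw [e] at this
        exact this
    · intro i k hi hik hkl hpos1 hpos2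
      rw [hldu i] at hpos1
      rw [hrdu k] at hpos2
      have hi2 : 2 ≤ i := by
        by_contra h
        have he : i - 1 = 0 := by omega
        rw [he, hB00] at hpos1
        omega
      have hk2 : 2 ≤ k := by omega
      have := hB2 (i - 1) (k - 1) (by omega) (by omega) (by omega) hpos1 hpos2
      omega

lemma card_rd0 {m n : ℕ} (hn : 1 ≤ n) :
    Nat.card {A : Arcs // MRed m n A ∧ rd A 1 = 0} = zm m (n - 1) := by
  unfold zm
  apply Nat.card_congr
  have key : ∀ (A : Arcs), MRed m n A → rd A 1 = 0 → ∀ p ∈ A, 1 < p.1 ∧ 1 < p.2 := by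
    intro A hA h0 p hp
    have hb := hA.1.1.1 p hp
    constructor
    · rcases Nat.lt_or_ge 1 p.1 with h | h
      · exact h
      · exfalso
        have hp1 : p.1 = 1 := by omega
        have : (p.1, p.2) ∈ A := by simpa using hp
        rw [hp1] at this
        have := rd_pos_of_mem this
        omega
    · omega
  refine ⟨fun A => ⟨shiftDown 1 A.1, ?_⟩, fun B => ⟨up 1 B.1, ?_⟩, ?_, ?_⟩
  · obtain ⟨hA, h0⟩ := A.2
    have hup : up 1 (shiftDown 1 A.1) = A.1 := up_shiftDown (key A.1 hA h0)
    have hd : IsDiagram (n - 1) (shiftDown 1 A.1) := by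
      intro q hq
      simp only [shiftDown, Finset.mem_image] at hq
      obtain ⟨p, hp, he⟩ := hq
      subst he
      have h1 := hA.1.1.1 p hp
      have h2 := key A.1 hA h0 p hp
      simp only
      omega
    apply (MRed_up1 hd).1
    rw [hup]
    have e : n - 1 + 1 = n := by omega
    rw [e]
    exact hA
  · have hBd : IsDiagram (n - 1) B.1 := B.2.1.1.1
    constructor
    · have := (MRed_up1 hBd).2 B.2
      have e : n - 1 + 1 = n := by omega
      rwa [e] at this
    · rw [rd_up' _ (le_refl 1)]
      exact rd_zero_of_diagram hBd (by omega)
  · intro A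
    apply Subtype.ext
    exact up_shiftDown (key A.1 A.2.1 A.2.2)
  · intro B
    apply Subtype.ext
    exact shiftDown_up 1 B.1

/-! ### Counting infrastructure -/

lemma finite_pred {n : ℕ} (P : Arcs → Prop) (h : ∀ A, P A → IsDiagram n A) :
    Finite {A : Arcs // P A} := by
  classical
  let S := ((Finset.range (n + 1)) ×ˢ (Finset.range (n + 1))).powerset
  have hmem : ∀ a : {A : Arcs // P A}, a.1 ∈ S := by
    intro a
    rw [Finset.mem_powerset]
    intro p hp
    have := h a.1 a.2 p hp
    rw [Finset.mem_product, Finset.mem_range, Finset.mem_range]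
    omega
  apply Finite.of_injective (fun a : {A : Arcs // P A} => (⟨a.1, hmem a⟩ : {B // B ∈ S}))
  intro a b hab
  apply Subtype.ext
  have := congrArg (Subtype.val : {B // B ∈ S} → Arcs) hab
  exact this

lemma card_or_split (P Q : Arcs → Prop) {n : ℕ}
    (hP : ∀ A, P A → IsDiagram n A) (hQ : ∀ A, Q A → IsDiagram n A)
    (hdisj : ∀ A, ¬(P A ∧ Q A)) :
    Nat.card {A : Arcs // P A ∨ Q A} = Nat.card {A // P A} + Nat.card {A // Q A} := by
  classical
  haveI := finite_pred P hP
  haveI := finite_pred Q hQ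
  rw [Nat.card_congr (subtypeOrEquiv P Q (by
    rw [Pi.disjoint_iff]
    intro A
    rw [disjoint_iff]
    by_cases h1 : P A
    · by_cases h2 : Q A
      · exact absurd ⟨h1, h2⟩ (hdisj A)
      · simp [h1, h2]
    · simp [h1]))]
  exact Nat.card_sum

lemma card_fiber_sum {α : Type} {β : Type} [Fintype β] [Finite α] (f : α → β) :
    Nat.card α = ∑ b : β, Nat.card {a : α // f a = b} := by
  classical
  letI : Fintype α := Fintype.ofFinite α
  rw [← Nat.card_congr (Equiv.sigmaFiberEquiv f)]
  rw [Nat.card_eq_fintype_card, Fintype.card_sigma]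
  simp [Nat.card_eq_fintype_card]

/-- Count of structures with `rd(1) = 1` (type `F`). -/
noncomputable def fcnt (m n : ℕ) : ℕ := Nat.card {A : Arcs // MRed m n A ∧ rd A 1 = 1}

/-- Count of inner structures with prescribed left degree at the last vertex. -/
noncomputable def bcnt (m a n : ℕ) : ℕ :=
    Nat.card {A : Arcs // MRed m n A ∧ ld A n = a - 1}

/-- Count of type-`F` structures whose distinguished arc has `ld(j) = a`. -/
noncomputable def ccnt (m a n : ℕ) : ℕ :=
    Nat.card {A : Arcs // MRed m n A ∧ rd A 1 = 1 ∧ ld A (arcTo A) = a}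

lemma fcnt_zero (m : ℕ) : fcnt m 0 = 0 := by
  unfold fcnt
  have : IsEmpty {A : Arcs // MRed m 0 A ∧ rd A 1 = 1} := by
    constructor
    rintro ⟨A, hA, h1⟩
    rw [empty_of_diagram_zero hA.1.1.1] at h1
    simp [rd] at h1
  simp [Nat.card_of_isEmpty]

lemma gcnt_zero (m : ℕ) (hm : 2 ≤ m) : gcnt m 0 = 1 := by
  unfold gcnt
  have : Unique {A : Arcs // TypeG m 0 A} := by
    refine ⟨⟨⟨∅, ?_⟩⟩, ?_⟩
    · exact ⟨MRed_empty m 0, by simp [deg, ld, rd]⟩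
    · rintro ⟨A, hA, _⟩
      apply Subtype.ext
      exact empty_of_diagram_zero hA.1.1.1
  rw [Nat.card_unique]

lemma mirror_count (m : ℕ) (hm : 2 ≤ m) (l : ℕ) :
    Nat.card {A : Arcs // MRed m l A ∧ ld A l = 1} = fcnt m l := by
  rcases Nat.eq_zero_or_pos l with hl | hl
  · subst hl
    rw [fcnt_zero]
    have : IsEmpty {A : Arcs // MRed m 0 A ∧ ld A 0 = 1} := by
      constructor
      rintro ⟨A, hA, h1⟩
      rw [empty_of_diagram_zero hA.1.1.1] at h1
      simp [ld] at h1
    simp [Nat.card_of_isEmpty]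
  · unfold fcnt
    apply Nat.card_congr
    refine ⟨fun A => ⟨refl l A.1, ?_⟩, fun A => ⟨refl l A.1, ?_⟩, ?_, ?_⟩
    · obtain ⟨hA, h1⟩ := A.2
      refine ⟨MRed_refl hm hA, ?_⟩
      rw [rd_refl hA.1.1.1 (by omega) (by omega)]
      have e : l + 1 - 1 = l := by omega
      rw [e]
      exact h1
    · obtain ⟨hA, h1⟩ := A.2
      refine ⟨MRed_refl hm hA, ?_⟩
      rw [ld_refl hA.1.1.1 (by omega) (by omega)]
      have e : l + 1 - l = 1 := by omega
      rw [e]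
      exact h1
    · intro A
      apply Subtype.ext
      exact refl_refl A.2.1.1.1.1
    · intro A
      apply Subtype.ext
      exact refl_refl A.2.1.1.1.1

lemma MRed_last_iff {m l : ℕ} (hl : 1 ≤ l) (B : Arcs) :
    (MRed m l B ∧ ld B l = 0) ↔ MRed m (l - 1) B := by
  constructor
  · rintro ⟨⟨⟨⟨hd, hcr⟩, hdeg, hboth⟩, h1, h2⟩, h0⟩
    have hd' : IsDiagram (l - 1) B := by
      intro p hp
      have hb := hd p hp
      have hne : p.2 ≠ l := by
        intro he
        have hmem : (p.1, p.2) ∈ B := by simpa using hp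
        rw [he] at hmem
        have := ld_pos_of_mem hmem
        omega
      omega
    refine ⟨⟨⟨hd', hcr⟩, hdeg, hboth⟩, ?_, ?_⟩
    · intro i hi him
      exact h1 i hi (by omega)
    · intro i k hi hik hkl
      exact h2 i k hi hik (by omega)
  · rintro ⟨⟨⟨hd, hcr⟩, hdeg, hboth⟩, h1, h2⟩
    have hd' : IsDiagram l B := by
      intro p hp
      have := hd p hp
      omega
    have h0 : ld B l = 0 := ld_zero_of_diagram hd (Or.inr (by omega))
    have h0r : rd B l = 0 := rd_zero_of_diagram hd (Or.inr (by omega))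
    refine ⟨⟨⟨⟨hd', hcr⟩, hdeg, hboth⟩, ?_, ?_⟩, h0⟩
    · intro i hi him
      by_cases hc : i + m ≤ l - 1 + 1
      · exact h1 i hi hc
      · have he : i + m - 1 = l := by omega
        rw [he, h0r]
        have := hdeg i
        unfold deg at this
        omega
    · intro i k hi hik hkl hpos1 hpos2
      by_cases hc : k ≤ l - 1
      · exact h2 i k hi hik hc hpos1 hpos2
      · have he : k = l := by omega
        rw [he, h0r] at hpos2
        omega

lemma bcnt_one {m l : ℕ} (hl : 1 ≤ l) : bcnt m 1 l = zm m (l - 1) := by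
  unfold bcnt zm
  apply Nat.card_congr
  apply Equiv.subtypeEquivRight
  intro B
  have : (1 : ℕ) - 1 = 0 := rfl
  rw [this]
  exact MRed_last_iff hl B

lemma bcnt_two {m : ℕ} (hm : 2 ≤ m) (l : ℕ) : bcnt m 2 l = fcnt m l := by
  unfold bcnt
  have : (2 : ℕ) - 1 = 1 := rfl
  rw [this]
  exact mirror_count m hm l

lemma gcnt_split {m n : ℕ} (hm : 2 ≤ m) (hn : 1 ≤ n) :
    gcnt m n = zm m (n - 1) + fcnt m n := by
  unfold gcnt
  have he : ∀ A : Arcs, TypeG m n A ↔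
      ((MRed m n A ∧ rd A 1 = 0) ∨ (MRed m n A ∧ rd A 1 = 1)) := by
    intro A
    constructor
    · rintro ⟨hA, hd⟩
      have hld1 : ld A 1 = 0 := ld_zero_of_diagram hA.1.1.1 (by omega)
      unfold deg at hd
      by_cases h : rd A 1 = 0
      · exact Or.inl ⟨hA, h⟩
      · exact Or.inr ⟨hA, by omega⟩
    · rintro (⟨hA, h⟩ | ⟨hA, h⟩) <;>
      · refine ⟨hA, ?_⟩
        have hld1 : ld A 1 = 0 := ld_zero_of_diagram hA.1.1.1 (by omega)
        unfold deg
        omega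
  rw [Nat.card_congr (Equiv.subtypeEquivRight he)]
  rw [card_or_split _ _ (fun A h => h.1.1.1.1) (fun A h => h.1.1.1.1) (fun A h => by omega)]
  rw [card_rd0 hn]
  rfl

lemma fcnt_split (m n : ℕ) (hm : 2 ≤ m) : fcnt m n = ccnt m 1 n + ccnt m 2 n := by
  unfold fcnt ccnt
  have he : ∀ A : Arcs, (MRed m n A ∧ rd A 1 = 1) ↔
      ((MRed m n A ∧ rd A 1 = 1 ∧ ld A (arcTo A) = 1) ∨
        (MRed m n A ∧ rd A 1 = 1 ∧ ld A (arcTo A) = 2)) := by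
    intro A
    constructor
    · rintro ⟨hA, h1⟩
      obtain ⟨j, hj⟩ := exists_arc_of_rd_one h1
      have he := arcTo_eq h1 hj
      have hpos : 1 ≤ ld A j := ld_pos_of_mem hj
      have hle : ld A j ≤ 2 := by
        have := hA.1.2.1 j
        unfold deg at this
        omega
      rw [he]
      by_cases h : ld A j = 1
      · exact Or.inl ⟨hA, h1, h⟩
      · exact Or.inr ⟨hA, h1, by omega⟩
    · rintro (⟨hA, h1, _⟩ | ⟨hA, h1, _⟩) <;> exact ⟨hA, h1⟩
  rw [Nat.card_congr (Equiv.subtypeEquivRight he)]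
  exact card_or_split _ _ (fun A h => h.1.1.1.1) (fun A h => h.1.1.1.1) (fun A h => by omega)

lemma inn_glue {j l : ℕ} {B C : Arcs} (hj : 2 ≤ j) (hBd : IsDiagram (j - 1) B)
    (hCd : IsDiagram l C) : inn j (glue j B C) = B := by
  ext q
  rw [mem_inn]
  constructor
  · rintro ⟨p, ⟨hp, h1, h2⟩, he⟩
    rcases mem_glue.1 hp with h | ⟨b, hb, hbe⟩ | ⟨c, hc, hce⟩
    · subst h
      simp at h1
    · subst hbe
      subst he
      simpa using hb
    · subst hce
      have := hCd c hc
      simp only at h2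
      omega
  · intro hq
    have hqb := hBd q hq
    refine ⟨(q.1 + 1, q.2 + 1), ⟨?_, ?_, ?_⟩, ?_⟩
    · exact mem_glue.2 (Or.inr (Or.inl ⟨q, hq, rfl⟩))
    · simp only
      omega
    · simp only
      omega
    · simp

lemma outer_glue {j l : ℕ} {B C : Arcs} (hj : 2 ≤ j) (hBd : IsDiagram (j - 1) B)
    (hCd : IsDiagram l C) : outer j (glue j B C) = C := by
  ext q
  rw [mem_outer]
  constructor
  · rintro ⟨p, ⟨hp, h1⟩, he⟩
    rcases mem_glue.1 hp with h | ⟨b, hb, hbe⟩ | ⟨c, hc, hce⟩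
    · subst h
      simp only at h1
      omega
    · subst hbe
      have := hBd b hb
      simp only at h1
      omega
    · subst hce
      subst he
      simpa using hc
  · intro hq
    have hqb := hCd q hq
    refine ⟨(q.1 + j, q.2 + j), ⟨?_, ?_⟩, ?_⟩
    · exact mem_glue.2 (Or.inr (Or.inr ⟨q, hq, rfl⟩))
    · simp only
      omega
    · simp

lemma fiber_card {m a n j : ℕ} (hm : 2 ≤ m) (ha1 : 1 ≤ a) (ha2 : a ≤ 2)
    (hj2 : 2 ≤ j) (hjn : j ≤ n) :
    Nat.card {A : Arcs // (MRed m n A ∧ rd A 1 = 1 ∧ ld A (arcTo A) = a) ∧ arcTo A = j}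
      = bcnt m a (j - 1) * tc m a 0 (n - j) := by
  rw [bcnt, tc, ← Nat.card_prod]
  apply Nat.card_congr
  have harcmem : ∀ A : Arcs, MRed m n A → rd A 1 = 1 → arcTo A = j → (1, j) ∈ A := by
    intro A hA h1 hje
    obtain ⟨j', hj'⟩ := exists_arc_of_rd_one h1
    have := arcTo_eq h1 hj'
    rw [hje] at this
    rw [this]
    exact hj'
  refine
    { toFun := fun x => (⟨inn j x.1, ?_⟩, ⟨outer j x.1, ?_⟩)
      invFun := fun y => ⟨glue j y.1.1 y.2.1, ?_⟩
      left_inv := ?_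
      right_inv := ?_ }
  · obtain ⟨⟨hA, h1, h2⟩, hje⟩ := x.2
    have hjm := harcmem x.1 hA h1 hje
    obtain ⟨_, _, _, _, hBM, hBl, _, _⟩ := split_master hm hA h1 hjm
    rw [hje] at h2
    rw [h2] at hBl
    exact ⟨hBM, hBl⟩
  · obtain ⟨⟨hA, h1, h2⟩, hje⟩ := x.2
    have hjm := harcmem x.1 hA h1 hje
    obtain ⟨_, _, _, _, _, _, hBT, _⟩ := split_master hm hA h1 hjm
    rw [hje] at h2
    rw [h2] at hBT
    exact hBT
  · obtain ⟨hgm, hgr, hgmem, hgl⟩ :=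
      glue_master hm hj2 hjn ha1 ha2 y.1.2.1 y.1.2.2 y.2.2
    have hae := arcTo_eq hgr hgmem
    refine ⟨⟨hgm, hgr, ?_⟩, hae⟩
    rw [hae]
    exact hgl
  · intro x
    apply Subtype.ext
    obtain ⟨⟨hA, h1, h2⟩, hje⟩ := x.2
    have hjm := harcmem x.1 hA h1 hje
    obtain ⟨_, _, _, _, _, _, _, hglue⟩ := split_master hm hA h1 hjm
    exact hglue
  · intro y
    have hBd : IsDiagram (j - 1) y.1.1 := y.1.2.1.1.1.1
    have hCd : IsDiagram (n - j) y.2.1 := y.2.2.1.1.1.1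
    have e1 : inn j (glue j y.1.1 y.2.1) = y.1.1 := inn_glue hj2 hBd hCd
    have e2 : outer j (glue j y.1.1 y.2.1) = y.2.1 := outer_glue hj2 hBd hCd
    exact Prod.ext (Subtype.ext e1) (Subtype.ext e2)

lemma ccnt_eq {m a n : ℕ} (hm : 2 ≤ m) (ha1 : 1 ≤ a) (ha2 : a ≤ 2) :
    ccnt m a n = ∑ j ∈ Finset.Icc 2 n, bcnt m a (j - 1) * tc m a 0 (n - j) := by
  classical
  unfold ccnt
  haveI : Finite {A : Arcs // MRed m n A ∧ rd A 1 = 1 ∧ ld A (arcTo A) = a} :=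
    finite_pred _ (fun A h => h.1.1.1.1)
  have harc : ∀ (A : {A : Arcs // MRed m n A ∧ rd A 1 = 1 ∧ ld A (arcTo A) = a}),
      arcTo A.1 ∈ Finset.Icc 2 n := by
    intro A
    obtain ⟨hA, h1, h2⟩ := A.2
    obtain ⟨j, hj⟩ := exists_arc_of_rd_one h1
    have he := arcTo_eq h1 hj
    rw [he]
    obtain ⟨hj2, hjn, _⟩ := split_master hm hA h1 hj
    exact Finset.mem_Icc.2 ⟨hj2, hjn⟩
  rw [card_fiber_sum (fun A => (⟨arcTo A.1, harc A⟩ : ↥(Finset.Icc 2 n)))]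
  rw [← Finset.sum_coe_sort (Finset.Icc 2 n) (fun j => bcnt m a (j - 1) * tc m a 0 (n - j))]
  refine Finset.sum_congr rfl ?_
  intro b _
  have hb := b.2
  rw [Finset.mem_Icc] at hb
  rw [← fiber_card hm ha1 ha2 hb.1 hb.2]
  apply Nat.card_congr
  refine
    { toFun := fun x => ⟨x.1.1, x.1.2, ?_⟩
      invFun := fun y => ⟨⟨y.1, y.2.1⟩, ?_⟩
      left_inv := fun x => rfl
      right_inv := fun y => rfl }
  · have := congrArg Subtype.val x.2
    exact this
  · exact Subtype.ext y.2.2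

/-! ### The generating function computation -/

/-- Generating function of type-`F` structures. -/
noncomputable def Fser (m : ℕ) : PowerSeries ℚ := PowerSeries.mk fun n => (fcnt m n : ℚ)

lemma S1 {m : ℕ} (hm : 2 ≤ m) : Ggf m = 1 + Xq * Zm m + Fser m := by
  ext n
  simp only [Ggf, Fser, Xq, map_add, PowerSeries.coeff_mk, PowerSeries.coeff_one]
  have hx : (PowerSeries.X : PowerSeries ℚ) * Zm m = PowerSeries.X ^ 1 * Zm m := by
    rw [pow_one]
  rw [hx, PowerSeries.coeff_X_pow_mul']
  rcases Nat.eq_zero_or_pos n with h | h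
  · subst h
    rw [gcnt_zero m hm, fcnt_zero]
    norm_num
  · rw [if_pos (by omega : 1 ≤ n), if_neg (by omega : ¬n = 0)]
    simp only [Zm, PowerSeries.coeff_mk]
    rw [gcnt_split hm h]
    push_cast
    ring

lemma sum_reindex1 {m n : ℕ} (hn : 2 ≤ n) :
    ∑ j ∈ Finset.Icc 2 n, bcnt m 1 (j - 1) * tc m 1 0 (n - j)
      = ∑ p ∈ Finset.HasAntidiagonal.antidiagonal (n - 2), zm m p.1 * tc m 1 0 p.2 := by
  refine Finset.sum_nbij' (fun j => ((j : ℕ) - 2, n - j)) (fun p => p.1 + 2)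
    ?_ ?_ ?_ ?_ ?_
  · intro j hj
    simp only [Finset.mem_Icc] at hj
    simp only [Finset.HasAntidiagonal.mem_antidiagonal]
    omega
  · intro p hp
    simp only [Finset.HasAntidiagonal.mem_antidiagonal] at hp
    simp only [Finset.mem_Icc]
    omega
  · intro j hj
    simp only [Finset.mem_Icc] at hj
    dsimp only
    omega
  · intro p hp
    simp only [Finset.HasAntidiagonal.mem_antidiagonal] at hp
    have e1 : p.1 + 2 - 2 = p.1 := by omega
    have e2 : n - (p.1 + 2) = p.2 := by omega
    rw [e1, e2]
  · intro j hj
    simp only [Finset.mem_Icc] at hj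
    dsimp only
    rw [bcnt_one (by omega : 1 ≤ j - 1)]
    have e : j - 1 - 1 = j - 2 := by omega
    rw [e]

lemma sum_reindex2 {m n : ℕ} (hn : 1 ≤ n) (hm : 2 ≤ m) :
    ∑ j ∈ Finset.Icc 2 n, bcnt m 2 (j - 1) * tc m 2 0 (n - j)
      = ∑ p ∈ Finset.HasAntidiagonal.antidiagonal (n - 1), tc m 2 0 p.1 * fcnt m p.2 := by
  have hins : Finset.Icc 1 n = insert 1 (Finset.Icc 2 n) := by
    ext x
    simp only [Finset.mem_Icc, Finset.mem_insert]
    omega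
  have h1 : ∑ j ∈ Finset.Icc 1 n, bcnt m 2 (j - 1) * tc m 2 0 (n - j)
      = ∑ j ∈ Finset.Icc 2 n, bcnt m 2 (j - 1) * tc m 2 0 (n - j) := by
    rw [hins, Finset.sum_insert (by simp)]
    have : bcnt m 2 (1 - 1) * tc m 2 0 (n - 1) = 0 := by
      rw [show (1 : ℕ) - 1 = 0 from rfl, bcnt_two hm 0, fcnt_zero]
      ring
    rw [this, zero_add]
  rw [← h1]
  refine Finset.sum_nbij' (fun j => (n - (j : ℕ), j - 1)) (fun p => p.2 + 1)
    ?_ ?_ ?_ ?_ ?_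
  · intro j hj
    simp only [Finset.mem_Icc] at hj
    simp only [Finset.HasAntidiagonal.mem_antidiagonal]
    omega
  · intro p hp
    simp only [Finset.HasAntidiagonal.mem_antidiagonal] at hp
    simp only [Finset.mem_Icc]
    omega
  · intro j hj
    simp only [Finset.mem_Icc] at hj
    dsimp only
    omega
  · intro p hp
    simp only [Finset.HasAntidiagonal.mem_antidiagonal] at hp
    have e1 : n - (p.2 + 1) = p.1 := by omega
    have e2 : p.2 + 1 - 1 = p.2 := by omega
    rw [e1, e2]
  · intro j hj
    simp only [Finset.mem_Icc] at hj
    dsimp only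
    rw [bcnt_two hm]
    ring

lemma S2 {m : ℕ} (hm : 2 ≤ m) :
    Fser m = Xq ^ 2 * Zm m * Tgf m 1 0 + Xq * Tgf m 2 0 * Fser m := by
  ext n
  have ha1 : Xq ^ 2 * Zm m * Tgf m 1 0 = Xq ^ 2 * (Zm m * Tgf m 1 0) := by ring
  have ha2 : Xq * Tgf m 2 0 * Fser m = Xq ^ 1 * (Tgf m 2 0 * Fser m) := by ring
  rw [ha1, ha2]
  simp only [Fser, Xq, map_add, PowerSeries.coeff_mk]
  rw [PowerSeries.coeff_X_pow_mul', PowerSeries.coeff_X_pow_mul']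
  rw [fcnt_split m n hm]
  rw [ccnt_eq hm (by omega) (by omega), ccnt_eq hm (by omega) (by omega)]
  rcases Nat.lt_or_ge n 1 with h1 | h1
  · -- n = 0
    have hn0 : n = 0 := by omega
    subst hn0
    rw [if_neg (by omega), if_neg (by omega)]
    have : Finset.Icc 2 0 = ∅ := by
      ext x
      simp only [Finset.mem_Icc, Finset.notMem_empty, iff_false]
      omega
    rw [this]
    simp
  · rcases Nat.lt_or_ge n 2 with h2 | h2
    · -- n = 1
      have hn1 : n = 1 := by omega
      subst hn1
      rw [if_neg (by omega), if_pos (by omega)]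
      have he : Finset.Icc 2 1 = ∅ := by
        ext x
        simp only [Finset.mem_Icc, Finset.notMem_empty, iff_false]
        omega
      rw [sum_reindex2 (by omega) hm, he]
      simp only [Finset.sum_empty, Nat.cast_zero, Nat.cast_add, zero_add]
      rw [PowerSeries.coeff_mul]
      push_cast
      apply Finset.sum_congr rfl
      intro p _
      simp [Tgf, Fser, PowerSeries.coeff_mk]
    · rw [if_pos (by omega), if_pos (by omega)]
      rw [sum_reindex1 h2, sum_reindex2 (by omega) hm]
      rw [PowerSeries.coeff_mul, PowerSeries.coeff_mul]
      push_cast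
      congr 1
      · apply Finset.sum_congr rfl
        intro p _
        simp [Tgf, Zm, PowerSeries.coeff_mk]
      · apply Finset.sum_congr rfl
        intro p _
        simp [Tgf, Fser, PowerSeries.coeff_mk]

/-- `G(x) = 1 + x·Z_m(x) + x²·Z_m(x)·T₂(x)/(1 − x·T₄(x))`. -/
theorem G_equation (m : ℕ) (hm : 2 ≤ m) :
    Ggf m = 1 + Xq * Zm m + Xq ^ 2 * Zm m * Tgf m 1 0 * (1 - Xq * Tgf m 2 0)⁻¹ := by
  have hS1 := S1 hm
  have hS2 := S2 hm
  set u : PowerSeries ℚ := 1 - Xq * Tgf m 2 0 with hu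
  have hcu : PowerSeries.constantCoeff u ≠ 0 := by
    have h1 : PowerSeries.constantCoeff u = 1 := by
      rw [hu]
      simp [Xq]
    rw [h1]
    exact one_ne_zero
  have hFu : Fser m * u = Xq ^ 2 * Zm m * Tgf m 1 0 := by
    rw [hu]
    linear_combination hS2
  have hF : Fser m = Xq ^ 2 * Zm m * Tgf m 1 0 * u⁻¹ := by
    have hinv := PowerSeries.mul_inv_cancel u hcu
    calc Fser m = Fser m * (u * u⁻¹) := by rw [hinv, mul_one]
      _ = Fser m * u * u⁻¹ := by ring
      _ = Xq ^ 2 * Zm m * Tgf m 1 0 * u⁻¹ := by rw [hFu]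
  rw [hS1, hF]
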